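/- Let H be a nontrivial module of G and F = f(G,H,h) the quotient with w_F(h) = χ_w(G[H]). Then χ_w(G) ≤ χ_w(F). -/

import Mathlib

variable {V : Type*} [Fintype V] [DecidableEq V]

/-- A stable (independent) set. -/
def IsStable (G : SimpleGraph V) (s : Set V) : Prop :=
  ∀ a ∈ s, ∀ b ∈ s, ¬ G.Adj a b

/-- A weighted coloring, given as a multiplicity function on finsets of vertices. -/
def IsWC (G : SimpleGraph V) (w : V → ℕ) (c : Finset V → ℕ) : Prop :=
  (∀ S : Finset V, c S ≠ 0 → IsStable G (S : Set V)) ∧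
  ∀ v : V, w v ≤ ∑ S : Finset V, (if v ∈ S then c S else 0)

/-- The cost of a weighted coloring. -/
def WCcost (c : Finset V → ℕ) : ℕ := ∑ S : Finset V, c S

/-- The weighted chromatic number. -/
noncomputable def chiW (G : SimpleGraph V) (w : V → ℕ) : ℕ :=
  sInf { n : ℕ | ∃ c : Finset V → ℕ, IsWC G w c ∧ n = WCcost c }

/-- A module of a graph. -/
def IsModule (G : SimpleGraph V) (H : Finset V) : Prop :=
  ∀ v ∉ H, (∀ u ∈ H, G.Adj v u) ∨ (∀ u ∈ H, ¬ G.Adj v u)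

def NontrivialModule (G : SimpleGraph V) (H : Finset V) : Prop :=
  IsModule G H ∧ 1 < H.card ∧ H.card < Fintype.card V

/-- The quotient graph f(G,H,h): `none` plays the role of the contracted vertex h. -/
def quotientGraph (G : SimpleGraph V) (H : Finset V) :
    SimpleGraph (Option {v : V // v ∉ H}) where
  Adj x y :=
    match x, y with
    | some a, some b => G.Adj a.1 b.1
    | some a, none => ∃ u ∈ H, G.Adj a.1 u
    | none, some b => ∃ u ∈ H, G.Adj b.1 u
    | none, none => False
  symm := by
    constructor
    rintro (a | a) (b | b) hab
    · exact hab
    · exact hab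
    · exact hab
    · exact hab.symm
  loopless := by
    constructor
    rintro (a | a) hab
    · exact hab
    · exact G.irrefl hab

/-- Weights on the quotient graph: h gets the weighted chromatic number of G[H]. -/
noncomputable def quotientWeights (G : SimpleGraph V) (w : V → ℕ) (H : Finset V) :
    Option {v : V // v ∉ H} → ℕ :=
  fun x => match x with
  | none => chiW (G.induce (H : Set V)) (fun v => w v.1)
  | some a => w a.1

def Prime' (G : SimpleGraph V) : Prop :=
  ∀ H : Finset V, IsModule G H → H.card ≤ 1 ∨ H = Finset.univ

def IsBuoy (G : SimpleGraph V) (S : Fin 5 → Finset V) : Prop :=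
  (∀ i, (S i).Nonempty) ∧
  (∀ v : V, ∃! i, v ∈ S i) ∧
  (∀ i, ∀ a ∈ S i, ∀ b ∈ S (i + 1), G.Adj a b) ∧
  (∀ i, ∀ a ∈ S i, ∀ b ∈ S (i + 2), ¬ G.Adj a b)

section AuxWC

variable {α β γ : Type*}

/-- Every weight function admits some weighted coloring (by singletons). -/
lemma exists_isWC (G : SimpleGraph V) (w : V → ℕ) : ∃ c, IsWC G w c := by
  classical
  refine ⟨fun S => ∑ v : V, if S = {v} then w v else 0, ?_, ?_⟩
  · intro S hS a ha b hb
    have : ∃ v : V, S = {v} := by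
      by_contra hno
      push_neg at hno
      apply hS
      refine Finset.sum_eq_zero fun v _ => ?_
      simp [hno v]
    obtain ⟨v, rfl⟩ := this
    simp only [Finset.coe_singleton, Set.mem_singleton_iff] at ha hb
    subst ha; subst hb
    exact G.irrefl
  · intro v
    have h1 : (if v ∈ ({v} : Finset V) then ∑ u : V, if ({v} : Finset V) = {u} then w u else 0 else 0)
        ≤ ∑ S : Finset V, (if v ∈ S then ∑ u : V, if S = {u} then w u else 0 else 0) :=
      Finset.single_le_sum (f := fun S : Finset V => if v ∈ S then ∑ u : V, if S = {u} then w u else 0 else 0)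
        (fun S _ => by positivity) (Finset.mem_univ ({v} : Finset V))
    have h2 : (∑ u : V, if ({v} : Finset V) = {u} then w u else 0) = w v := by
      simp only [Finset.singleton_inj]
      rw [Finset.sum_ite_eq]
      simp
    simpa [h2] using h1

lemma chiW_exists (G : SimpleGraph V) (w : V → ℕ) :
    ∃ c, IsWC G w c ∧ chiW G w = WCcost c := by
  obtain ⟨c, hc⟩ := exists_isWC G w
  have hne : {n : ℕ | ∃ c : Finset V → ℕ, IsWC G w c ∧ n = WCcost c}.Nonempty :=
    ⟨WCcost c, c, hc, rfl⟩
  obtain ⟨c', hc', hn⟩ := Nat.sInf_mem hne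
  exact ⟨c', hc', hn⟩

lemma chiW_le_of_isWC {G : SimpleGraph V} {w : V → ℕ} {c : Finset V → ℕ} (hc : IsWC G w c) :
    chiW G w ≤ WCcost c :=
  Nat.sInf_le ⟨c, hc, rfl⟩

variable {W : Type*} [Fintype W] [DecidableEq W]

/-- The multiset of stable sets (with multiplicity) of a coloring. -/
def toMS (c : Finset W → ℕ) : Multiset (Finset W) :=
  ∑ S : Finset W, Multiset.replicate (c S) S

lemma count_toMS (c : Finset W → ℕ) (S : Finset W) : (toMS c).count S = c S := by
  classical
  rw [toMS, Multiset.count_sum']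
  simp [Multiset.count_replicate]

lemma card_toMS (c : Finset W → ℕ) : Multiset.card (toMS c) = WCcost c := by
  rw [toMS, Multiset.card_sum]
  simp [WCcost]

lemma mem_toMS {c : Finset W → ℕ} {S : Finset W} (h : S ∈ toMS c) : c S ≠ 0 := by
  have := Multiset.count_pos.mpr h
  rw [count_toMS] at this
  omega

lemma countP_eq_sum (M : Multiset (Finset W)) (p : Finset W → Prop) [DecidablePred p] :
    M.countP p = ∑ S : Finset W, if p S then M.count S else 0 := by
  classical
  induction M using Multiset.induction with
  | empty => simp
  | cons a M ih =>
    have hterm : ∀ S : Finset W,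
        (if p S then (a ::ₘ M).count S else 0)
          = (if p S then M.count S else 0) + (if S = a then (if p a then 1 else 0) else 0) := by
      intro S
      by_cases hSa : S = a
      · subst hSa
        by_cases hp : p S <;> simp [Multiset.count_cons, hp]
      · by_cases hp : p S <;> simp [Multiset.count_cons, hSa, hp]
    rw [Multiset.countP_cons, Finset.sum_congr rfl (fun S _ => hterm S),
      Finset.sum_add_distrib, ih, Finset.sum_ite_eq' Finset.univ a]
    simp

lemma countP_le_countP {p q : α → Prop} [DecidablePred p] [DecidablePred q] (M : Multiset α)
    (h : ∀ a ∈ M, p a → q a) : M.countP p ≤ M.countP q := by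
  classical
  induction M using Multiset.induction with
  | empty => simp
  | cons a M ih =>
    rw [Multiset.countP_cons, Multiset.countP_cons]
    have h1 : M.countP p ≤ M.countP q := ih fun x hx => h x (Multiset.mem_cons_of_mem hx)
    have h2 : (if p a then 1 else 0) ≤ (if q a then 1 else 0) := by
      by_cases hp : p a
      · simp [hp, h a (Multiset.mem_cons_self a M) hp]
      · simp [hp]
    omega

lemma auxZipRight (f : α → β → γ) (p : γ → Prop) (q : β → Prop)
    [DecidablePred p] [DecidablePred q]
    (hpq : ∀ a b, q b → p (f a b)) :
    ∀ (l2 : List β) (l1 : List α), l2.length ≤ l1.length →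
      Multiset.countP q ↑l2 ≤ Multiset.countP p ↑(List.zipWith f l1 l2)
  | [], _, _ => by simp
  | b :: m, [], h => by simp at h
  | b :: m, a :: l, h => by
    rw [← Multiset.cons_coe, List.zipWith_cons_cons, ← Multiset.cons_coe,
      Multiset.countP_cons, Multiset.countP_cons]
    have h1 := auxZipRight f p q hpq m l (by simpa using h)
    have h2 : (if q b then 1 else 0) ≤ (if p (f a b) then 1 else 0) := by
      by_cases hq : q b
      · simp [hq, hpq a b hq]
      · simp [hq]
    omega

lemma auxZipLeft (f : α → β → γ) (p : γ → Prop) (q : α → Prop)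
    [DecidablePred p] [DecidablePred q]
    (hpq : ∀ a b, q a → p (f a b)) :
    ∀ (l2 : List β) (l1 : List α),
      Multiset.countP q ↑l1 ≤ Multiset.countP p ↑(List.zipWith f l1 l2)
        + Multiset.countP q ↑(l1.drop l2.length)
  | [], l1 => by simp
  | b :: m, [] => by simp
  | b :: m, a :: l => by
    rw [← Multiset.cons_coe, List.zipWith_cons_cons, ← Multiset.cons_coe,
      Multiset.countP_cons, Multiset.countP_cons, List.length_cons, List.drop_succ_cons]
    have h1 := auxZipLeft f p q hpq m l
    have h2 : (if q a then 1 else 0) ≤ (if p (f a b) then 1 else 0) := by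
      by_cases hq : q a
      · simp [hq, hpq a b hq]
      · simp [hq]
    omega

lemma auxMemZip {f : α → β → γ} {x : γ} :
    ∀ {l1 : List α} {l2 : List β}, x ∈ List.zipWith f l1 l2 →
      ∃ a ∈ l1, ∃ b ∈ l2, x = f a b := by
  intro l1
  induction l1 with
  | nil => intro l2 h; simp at h
  | cons a l ih =>
    intro l2 h
    cases l2 with
    | nil => simp at h
    | cons b m =>
      rw [List.zipWith_cons_cons, List.mem_cons] at h
      rcases h with h | h
      · exact ⟨a, List.mem_cons_self, b, List.mem_cons_self, h⟩
      · obtain ⟨a', ha', b', hb', hx⟩ := ih h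
        exact ⟨a', List.mem_cons_of_mem _ ha', b', List.mem_cons_of_mem _ hb', hx⟩

end AuxWC

/-- χ_w(G) ≤ χ_w(F) for the quotient F = f(G,H,h). -/
theorem chiW_le_quotient (G : SimpleGraph V) (w : V → ℕ) (H : Finset V)
    (hH : NontrivialModule G H) :
    chiW G w ≤ chiW (quotientGraph G H) (quotientWeights G w H) := by
  classical
  obtain ⟨cF, hcF, hcostF⟩ := chiW_exists (quotientGraph G H) (quotientWeights G w H)
  obtain ⟨cH, hcH, hcostH⟩ := chiW_exists (G.induce (H : Set V)) (fun v => w v.1)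
  rw [hcostF]
  -- notation
  let φ : Finset (Option {v : V // v ∉ H}) → Finset V := fun S => (Finset.eraseNone S).image Subtype.val
  let ψ : Finset {x : V // x ∈ (H : Set V)} → Finset V := fun A => A.image Subtype.val
  let mg : Finset (Option {v : V // v ∉ H}) → Finset {x : V // x ∈ (H : Set V)} → Finset V :=
    fun S A => φ S ∪ ψ A
  have hmem_phi : ∀ (S : Finset (Option {v : V // v ∉ H})) (v : V),
      v ∈ φ S ↔ ∃ hv : v ∉ H, some ⟨v, hv⟩ ∈ S := by
    intro S v
    simp only [φ, Finset.mem_image, Finset.mem_eraseNone]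
    constructor
    · rintro ⟨b, hb, rfl⟩
      exact ⟨b.2, hb⟩
    · rintro ⟨hv, hS⟩
      exact ⟨⟨v, hv⟩, hS, rfl⟩
  have hmem_psi : ∀ (A : Finset {x : V // x ∈ (H : Set V)}) (v : V),
      v ∈ ψ A ↔ ∃ hv : v ∈ (H : Set V), (⟨v, hv⟩ : {x : V // x ∈ (H : Set V)}) ∈ A := by
    intro A v
    simp only [ψ, Finset.mem_image]
    constructor
    · rintro ⟨b, hb, rfl⟩
      exact ⟨b.2, hb⟩
    · rintro ⟨hv, hA⟩
      exact ⟨⟨v, hv⟩, hA, rfl⟩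
  set MF := toMS cF with hMF
  set MH := toMS cH with hMH
  set L0 := (MF.filter (fun S => none ∈ S)).toList with hL0
  set LH := MH.toList with hLH
  set LG := List.zipWith mg L0 LH with hLG
  set MG : Multiset (Finset V) :=
    (LG : Multiset (Finset V)) + (((L0.drop LH.length).map φ : List (Finset V)) : Multiset (Finset V)) + (MF.filter (fun S => ¬ none ∈ S)).map φ with hMG
  -- counting lemmas specialized
  have hLHlen : LH.length = WCcost cH := by
    rw [hLH, Multiset.length_toList, hMH, card_toMS]
  have hT : WCcost cH ≤ L0.length := by
    have hcov := hcF.2 none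
    have : quotientWeights G w H none = WCcost cH := by
      simp only [quotientWeights]
      exact hcostH
    rw [this] at hcov
    calc WCcost cH ≤ ∑ S : Finset (Option {v : V // v ∉ H}), (if none ∈ S then cF S else 0) := hcov
      _ = MF.countP (fun S => none ∈ S) := by
          rw [countP_eq_sum]
          exact Finset.sum_congr rfl fun S _ => by rw [hMF, count_toMS]
      _ = L0.length := by
          rw [hL0, Multiset.length_toList, Multiset.countP_eq_card_filter]
  -- membership facts
  have hmemL0 : ∀ S ∈ L0, cF S ≠ 0 ∧ none ∈ S := by
    intro S hS
    rw [hL0, Multiset.mem_toList, Multiset.mem_filter] at hS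
    exact ⟨mem_toMS hS.1, hS.2⟩
  have hmemLH : ∀ A ∈ LH, cH A ≠ 0 := by
    intro A hA
    rw [hLH, Multiset.mem_toList] at hA
    exact mem_toMS hA
  -- stability transfer
  have hstab_phi : ∀ S : Finset (Option {v : V // v ∉ H}), IsStable (quotientGraph G H) ↑S →
      IsStable G ↑(φ S) := by
    intro S hS a ha b hb hab
    rw [Finset.mem_coe, hmem_phi] at ha hb
    obtain ⟨ha', haS⟩ := ha
    obtain ⟨hb', hbS⟩ := hb
    exact hS _ haS _ hbS hab
  have hstab_mg : ∀ (S : Finset (Option {v : V // v ∉ H})) (A : Finset {x : V // x ∈ (H : Set V)}),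
      IsStable (quotientGraph G H) ↑S → none ∈ S →
      IsStable (G.induce (H : Set V)) ↑A → IsStable G ↑(mg S A) := by
    intro S A hS hnS hA a ha b hb hab
    rw [Finset.mem_coe, Finset.mem_union] at ha hb
    rcases ha with ha | ha <;> rcases hb with hb | hb
    · exact hstab_phi S hS a ha b hb hab
    · rw [hmem_phi] at ha
      rw [hmem_psi] at hb
      obtain ⟨ha', haS⟩ := ha
      obtain ⟨hb', hbA⟩ := hb
      have hadj : (quotientGraph G H).Adj (some ⟨a, ha'⟩) none := ⟨b, by simpa using hb', hab⟩
      exact hS _ haS _ hnS hadj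
    · rw [hmem_psi] at ha
      rw [hmem_phi] at hb
      obtain ⟨ha', haA⟩ := ha
      obtain ⟨hb', hbS⟩ := hb
      have hadj : (quotientGraph G H).Adj (some ⟨b, hb'⟩) none := ⟨a, by simpa using ha', hab.symm⟩
      exact hS _ hbS _ hnS hadj
    · rw [hmem_psi] at ha hb
      obtain ⟨ha', haA⟩ := ha
      obtain ⟨hb', hbA⟩ := hb
      exact hA _ haA _ hbA hab
  -- the coloring of G
  have hWC : IsWC G w (fun S => MG.count S) := by
    constructor
    · intro S' hS'
      have hS'mem : S' ∈ MG := Multiset.count_pos.mp (Nat.pos_of_ne_zero hS')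
      rw [hMG, Multiset.mem_add, Multiset.mem_add] at hS'mem
      rcases hS'mem with (h | h) | h
      · rw [Multiset.mem_coe] at h
        obtain ⟨S, hSmem, A, hAmem, rfl⟩ := auxMemZip h
        obtain ⟨hcS, hnS⟩ := hmemL0 S hSmem
        exact hstab_mg S A (hcF.1 S hcS) hnS (hcH.1 A (hmemLH A hAmem))
      · rw [Multiset.mem_coe, List.mem_map] at h
        obtain ⟨S, hSmem, rfl⟩ := h
        obtain ⟨hcS, _⟩ := hmemL0 S (List.mem_of_mem_drop hSmem)
        exact hstab_phi S (hcF.1 S hcS)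
      · rw [Multiset.mem_map] at h
        obtain ⟨S, hSmem, rfl⟩ := h
        rw [Multiset.mem_filter] at hSmem
        exact hstab_phi S (hcF.1 S (mem_toMS hSmem.1))
    · intro v
      have hsum : ∑ S : Finset V, (if v ∈ S then MG.count S else 0)
          = MG.countP (fun S => v ∈ S) := (countP_eq_sum MG _).symm
      rw [hsum, hMG, Multiset.countP_add, Multiset.countP_add]
      by_cases hv : v ∈ H
      · -- covered by the ψ-part of the zipped sets
        have hv' : v ∈ (H : Set V) := by simpa using hv
        have hcov := hcH.2 ⟨v, hv'⟩
        have h1 : w v ≤ MH.countP (fun A => (⟨v, hv'⟩ : {x : V // x ∈ (H : Set V)}) ∈ A) := by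
          calc w v ≤ ∑ A, (if (⟨v, hv'⟩ : {x : V // x ∈ (H : Set V)}) ∈ A then cH A else 0) :=
                hcov
            _ = _ := by
                rw [countP_eq_sum]
                exact Finset.sum_congr rfl fun A _ => by rw [hMH, count_toMS]
        have h2 : MH.countP (fun A => (⟨v, hv'⟩ : {x : V // x ∈ (H : Set V)}) ∈ A)
            ≤ Multiset.countP (fun S => v ∈ S) (LG : Multiset (Finset V)) := by
          rw [show MH = (LH : Multiset (Finset {x : V // x ∈ (H : Set V)})) from by rw [hLH, Multiset.coe_toList]]
          refine auxZipRight mg _ _ ?_ LH L0 (by omega)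
          intro S A hA
          rw [Finset.mem_union, hmem_psi]
          exact Or.inr ⟨hv', hA⟩
        calc w v ≤ Multiset.countP (fun S => v ∈ S) (LG : Multiset (Finset V)) := le_trans h1 h2
          _ ≤ _ := by omega
      · -- covered by the φ-parts
        have hcov := hcF.2 (some ⟨v, hv⟩)
        have h1 : w v ≤ MF.countP (fun S => some ⟨v, hv⟩ ∈ S) := by
          calc w v ≤ ∑ S, (if some ⟨v, hv⟩ ∈ S then cF S else 0) := hcov
            _ = _ := by
                rw [countP_eq_sum]
                exact Finset.sum_congr rfl fun S _ => by rw [hMF, count_toMS]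
        rw [Multiset.countP_eq_countP_filter_add MF _ (fun S => none ∈ S)] at h1
        have hsplit : (MF.filter (fun S => none ∈ S)).countP (fun S => some ⟨v, hv⟩ ∈ S)
            = Multiset.countP (fun S => some ⟨v, hv⟩ ∈ S) (L0 : Multiset (Finset (Option {v : V // v ∉ H}))) := by
          rw [hL0, Multiset.coe_toList]
        have h2 : Multiset.countP (fun S => some ⟨v, hv⟩ ∈ S) (L0 : Multiset (Finset (Option {v : V // v ∉ H})))
            ≤ Multiset.countP (fun S => v ∈ S) (LG : Multiset (Finset V))
              + Multiset.countP (fun S => some ⟨v, hv⟩ ∈ S) ((L0.drop LH.length : List (Finset (Option {v : V // v ∉ H}))) : Multiset (Finset (Option {v : V // v ∉ H}))) := by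
          refine auxZipLeft mg _ _ ?_ LH L0
          intro S A hS
          rw [Finset.mem_union, hmem_phi]
          exact Or.inl ⟨hv, hS⟩
        have h3 : Multiset.countP (fun S => some ⟨v, hv⟩ ∈ S) ((L0.drop LH.length : List (Finset (Option {v : V // v ∉ H}))) : Multiset (Finset (Option {v : V // v ∉ H})))
            ≤ Multiset.countP (fun S => v ∈ S) (((L0.drop LH.length).map φ : List (Finset V)) : Multiset (Finset V)) := by
          rw [← Multiset.map_coe, Multiset.countP_map, ← Multiset.countP_eq_card_filter]
          refine countP_le_countP _ ?_
          intro S _ hS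
          rw [hmem_phi]
          exact ⟨hv, hS⟩
        have h4 : (MF.filter (fun S => ¬ none ∈ S)).countP (fun S => some ⟨v, hv⟩ ∈ S)
            ≤ ((MF.filter (fun S => ¬ none ∈ S)).map φ).countP (fun S => v ∈ S) := by
          rw [Multiset.countP_map, ← Multiset.countP_eq_card_filter]
          refine countP_le_countP _ ?_
          intro S _ hS
          rw [hmem_phi]
          exact ⟨hv, hS⟩
        omega
  -- cost computation
  have hcost : WCcost (fun S => MG.count S) = WCcost cF := by
    have h1 : WCcost (fun S => MG.count S) = Multiset.card MG := by
      rw [WCcost]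
      exact Multiset.sum_count_eq_card fun a _ => Finset.mem_univ a
    have hlen : LG.length = LH.length := by
      rw [hLG, List.length_zipWith]
      omega
    have h2 : Multiset.card MG = LG.length + (L0.length - LH.length)
        + Multiset.card (MF.filter (fun S => ¬ none ∈ S)) := by
      rw [hMG, Multiset.card_add, Multiset.card_add, Multiset.coe_card, Multiset.coe_card,
        List.length_map, List.length_drop, Multiset.card_map]
    have h3 : L0.length + Multiset.card (MF.filter (fun S => ¬ none ∈ S))
        = Multiset.card MF := by
      rw [hL0, Multiset.length_toList]
      rw [← Multiset.card_add, Multiset.filter_add_not]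
    have h4 : Multiset.card MF = WCcost cF := by rw [hMF, card_toMS]
    omega
  calc chiW G w ≤ WCcost (fun S => MG.count S) := chiW_le_of_isWC hWC
    _ = WCcost cF := hcost
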